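/- Define f(b) = (1+b)²·ln(1+b) − b²·ln b − b·ln b − 2b·ln 4 for b > 0. Then f(b) ≥ 0 for all b > 0, with equality if and only if b = 1. -/

import Mathlib

open Real

noncomputable def Ffun (x : ℝ) : ℝ :=
  (1 + x) ^ 2 * Real.log (1 + x) - x ^ 2 * Real.log x - x * Real.log x
    - 2 * x * Real.log 4

noncomputable def Gfun (x : ℝ) : ℝ :=
  2 * (1 + x) * Real.log (1 + x) - (2 * x + 1) * Real.log x - 2 * Real.log 4

lemma log_one_add_gt {t : ℝ} (h0 : 0 < t) (h1 : t ≤ 1) : t / 2 < Real.log (1 + t) := by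
  have hne : -(t/2) ≠ 0 := by intro h; nlinarith
  have h2 : 1 - t/2 < Real.exp (-(t/2)) := by
    have := Real.add_one_lt_exp hne
    linarith
  have h3 : 0 < 1 - t/2 := by linarith
  have key : Real.exp (t/2) * Real.exp (-(t/2)) = 1 := by
    rw [← Real.exp_add]; simp
  have hep : 0 < Real.exp (t/2) := Real.exp_pos _
  have h5 : Real.exp (t/2) * (1 - t/2) < 1 := by nlinarith
  have h4 : Real.exp (t/2) < 1 + t := by nlinarith
  calc t/2 = Real.log (Real.exp (t/2)) := (Real.log_exp _).symm
  _ < Real.log (1 + t) := Real.log_lt_log (Real.exp_pos _) h4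

lemma hasDerivF {b : ℝ} (hb : 0 < b) : HasDerivAt Ffun (Gfun b) b := by
  have h1b : (0:ℝ) < 1 + b := by linarith
  have hlog1 : HasDerivAt (fun x : ℝ => Real.log (1 + x)) ((1+b)⁻¹) b := by
    have h := (Real.hasDerivAt_log h1b.ne').comp b ((hasDerivAt_id b).const_add 1)
    simp at h ⊢; exact h
  have hsq : HasDerivAt (fun x : ℝ => (1 + x) ^ 2) (2 * (1+b)) b := by
    have h := ((hasDerivAt_id b).const_add 1).pow 2
    simp at h ⊢; exact h
  have hA : HasDerivAt (fun x : ℝ => (1 + x) ^ 2 * Real.log (1 + x))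
      (2 * (1+b) * Real.log (1+b) + (1+b)^2 * (1+b)⁻¹) b := hsq.mul hlog1
  have hB : HasDerivAt (fun x : ℝ => x ^ 2 * Real.log x)
      (2 * b ^ 1 * Real.log b + b ^ 2 * b⁻¹) b := by
    have h := (hasDerivAt_pow 2 b).mul (Real.hasDerivAt_log hb.ne')
    simp at h ⊢; exact h
  have hC : HasDerivAt (fun x : ℝ => x * Real.log x) (1 * Real.log b + b * b⁻¹) b := by
    have h := (hasDerivAt_id b).mul (Real.hasDerivAt_log hb.ne')
    simp at h ⊢; exact h
  have hD : HasDerivAt (fun x : ℝ => 2 * x * Real.log 4) (2 * Real.log 4) b := by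
    have h := ((hasDerivAt_id b).const_mul 2).mul_const (Real.log 4)
    simpa using h
  have H := ((hA.sub hB).sub hC).sub hD
  refine H.congr_deriv ?_
  unfold Gfun
  field_simp
  ring

lemma hasDerivG {b : ℝ} (hb : 0 < b) :
    HasDerivAt Gfun (2 * Real.log (1+b) - 2 * Real.log b - b⁻¹) b := by
  have h1b : (0:ℝ) < 1 + b := by linarith
  have hlog1 : HasDerivAt (fun x : ℝ => Real.log (1 + x)) ((1+b)⁻¹) b := by
    have h := (Real.hasDerivAt_log h1b.ne').comp b ((hasDerivAt_id b).const_add 1)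
    simp at h ⊢; exact h
  have hA : HasDerivAt (fun x : ℝ => 2 * (1 + x) * Real.log (1 + x))
      (2 * Real.log (1+b) + 2 * (1+b) * (1+b)⁻¹) b := by
    have h1 : HasDerivAt (fun x : ℝ => 2 * (1 + x)) 2 b := by
      have := ((hasDerivAt_id b).const_add 1).const_mul 2
      simpa using this
    have h := h1.mul hlog1
    exact h
  have hB : HasDerivAt (fun x : ℝ => (2 * x + 1) * Real.log x)
      (2 * Real.log b + (2*b+1) * b⁻¹) b := by
    have h1 : HasDerivAt (fun x : ℝ => 2 * x + 1) 2 b := by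
      have := (((hasDerivAt_id b).const_mul 2)).add_const 1
      simpa using this
    have h := h1.mul (Real.hasDerivAt_log hb.ne')
    exact h
  have H := (hA.sub hB).sub_const (2 * Real.log 4)
  refine H.congr_deriv ?_
  field_simp
  ring

lemma G_one : Gfun 1 = 0 := by
  have h4 : Real.log 4 = 2 * Real.log 2 := by
    rw [show (4:ℝ) = 2 ^ 2 by norm_num, Real.log_pow]; push_cast; ring
  simp only [Gfun, Real.log_one]
  rw [show (1:ℝ) + 1 = 2 by norm_num, h4]; ring

lemma F_one : Ffun 1 = 0 := by
  have h4 : Real.log 4 = 2 * Real.log 2 := by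
    rw [show (4:ℝ) = 2 ^ 2 by norm_num, Real.log_pow]; push_cast; ring
  simp only [Ffun, Real.log_one]
  rw [show (1:ℝ) + 1 = 2 by norm_num, h4]; ring

lemma G_mono : StrictMonoOn Gfun (Set.Ici 1) := by
  apply strictMonoOn_of_deriv_pos (convex_Ici 1)
  · intro x hx
    have hx0 : (0:ℝ) < x := lt_of_lt_of_le one_pos hx
    exact (hasDerivG hx0).differentiableAt.continuousAt.continuousWithinAt
  · intro x hx
    rw [interior_Ici] at hx
    have hx1 : (1:ℝ) < x := hx
    have hx0 : (0:ℝ) < x := by linarith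
    rw [(hasDerivG hx0).deriv]
    have ht0 : 0 < x⁻¹ := inv_pos.mpr hx0
    have ht1 : x⁻¹ ≤ 1 := by
      rw [inv_le_one_iff₀]; right; linarith
    have hkey := log_one_add_gt ht0 ht1
    have e1 : (1:ℝ) + x⁻¹ = (1 + x) / x := by field_simp; ring
    have e2 : Real.log ((1 + x) / x) = Real.log (1 + x) - Real.log x :=
      Real.log_div (by linarith) hx0.ne'
    rw [e1, e2] at hkey
    linarith

lemma F_mono : StrictMonoOn Ffun (Set.Ici 1) := by
  apply strictMonoOn_of_deriv_pos (convex_Ici 1)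
  · intro x hx
    have hx0 : (0:ℝ) < x := lt_of_lt_of_le one_pos hx
    exact (hasDerivF hx0).differentiableAt.continuousAt.continuousWithinAt
  · intro x hx
    rw [interior_Ici] at hx
    have hx1 : (1:ℝ) < x := hx
    have hx0 : (0:ℝ) < x := by linarith
    rw [(hasDerivF hx0).deriv]
    have := G_mono (Set.self_mem_Ici) (Set.mem_Ici.mpr hx1.le) hx1
    rw [G_one] at this
    exact this

lemma F_pos {b : ℝ} (hb : 1 < b) : 0 < Ffun b := by
  have := F_mono (Set.self_mem_Ici) (Set.mem_Ici.mpr hb.le) hb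
  rwa [F_one] at this

lemma F_symm {b : ℝ} (hb : 0 < b) : Ffun b = b ^ 2 * Ffun b⁻¹ := by
  have h1b : (0:ℝ) < 1 + b := by linarith
  have e1 : (1:ℝ) + b⁻¹ = (1 + b) / b := by field_simp; ring
  have e2 : Real.log ((1 + b) / b) = Real.log (1 + b) - Real.log b :=
    Real.log_div h1b.ne' hb.ne'
  simp only [Ffun, e1, e2, Real.log_inv]
  field_simp
  ring

lemma F_pos' {b : ℝ} (hb : 0 < b) (hne : b ≠ 1) : 0 < Ffun b := by
  rcases lt_or_gt_of_ne hne with h | h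
  · have h1 : 1 < b⁻¹ := (one_lt_inv₀ hb).mpr h
    have h2 := F_pos h1
    rw [F_symm hb]
    positivity
  · exact F_pos h

theorem stmt9 (b : ℝ) (hb : 0 < b) :
    0 ≤ (1 + b) ^ 2 * Real.log (1 + b) - b ^ 2 * Real.log b - b * Real.log b
        - 2 * b * Real.log 4 ∧
    ((1 + b) ^ 2 * Real.log (1 + b) - b ^ 2 * Real.log b - b * Real.log b
        - 2 * b * Real.log 4 = 0 ↔ b = 1) := by
  have hF : (1 + b) ^ 2 * Real.log (1 + b) - b ^ 2 * Real.log b - b * Real.log b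
      - 2 * b * Real.log 4 = Ffun b := rfl
  rw [hF]
  constructor
  · by_cases h : b = 1
    · rw [h, F_one]
    · exact (F_pos' hb h).le
  · constructor
    · intro h
      by_contra hne
      exact absurd h (ne_of_gt (F_pos' hb hne))
    · intro h; rw [h, F_one]
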